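/- Row monotonicity of the optimal allocation: in any optimal solution of minimizing ∑_{n,m} κ·f_{n,m}³·Δt_m subject to the per-slot capacity constraints ∑_{n=1}^{m−1} f_{n,m} ≤ F_max, completion constraints ∑_{m=n+1}^{N+1} f_{n,m}·Δt_m ≥ F_n, and f_{n,m} ≥ 0, the frequencies allocated to each task are nonincreasing over time: f*_{n,n+1} ≥ f*_{n,n+2} ≥ ⋯ ≥ f*_{n,N+1} for every n ∈ {1,…,N}. -/

import Mathlib

open Finset in
/-- Feasibility of a frequency allocation for the asynchronous MEC problem. -/
def FeasibleAlloc (N : ℕ) (Fmax : ℝ) (F Δt : ℕ → ℝ) (f : ℕ → ℕ → ℝ) : Prop :=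
  (∀ n ∈ Icc 1 N, ∀ m ∈ Icc (n + 1) (N + 1), 0 ≤ f n m) ∧
  (∀ m ∈ Icc 2 (N + 1), ∑ n ∈ Icc 1 (m - 1), f n m ≤ Fmax) ∧
  (∀ n ∈ Icc 1 N, F n ≤ ∑ m ∈ Icc (n + 1) (N + 1), f n m * Δt m)

open Finset in
/-- Total server energy of an allocation. -/
def allocEnergy (N : ℕ) (κ : ℝ) (Δt : ℕ → ℝ) (f : ℕ → ℕ → ℝ) : ℝ :=
  ∑ n ∈ Icc 1 N, ∑ m ∈ Icc (n + 1) (N + 1), κ * f n m ^ 3 * Δt m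

open Finset in
lemma sum_support_pair {s : Finset ℕ} {d : ℕ → ℝ} {i j : ℕ} (hij : i ≠ j)
    (hi : i ∈ s) (hj : j ∈ s) (hd : ∀ x ∈ s, x ≠ i → x ≠ j → d x = 0) :
    ∑ x ∈ s, d x = d i + d j := by
  have hsub : ({i, j} : Finset ℕ) ⊆ s := by
    intro x hx
    rcases Finset.mem_insert.mp hx with rfl | hx
    · exact hi
    · rw [Finset.mem_singleton] at hx; subst hx; exact hj
  rw [← Finset.sum_subset hsub, Finset.sum_pair hij]
  intro x hx hxn
  simp only [Finset.mem_insert, Finset.mem_singleton, not_or] at hxn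
  exact hd x hx hxn.1 hxn.2

lemma cube_dec_strict {a b ε r : ℝ} (hε : 0 < ε) (hr : 0 < r) (ha : 0 ≤ a)
    (h : a + ε < b - ε * r) :
    (a + ε) ^ 3 * r + (b - ε * r) ^ 3 < a ^ 3 * r + b ^ 3 := by
  have hεr : 0 < ε * r := mul_pos hε hr
  have hx : 0 < a + ε := by linarith
  have h1 : (a + ε) ^ 2 < (b - ε * r) ^ 2 := by nlinarith
  have h2 : (a + ε) * a ≤ (b - ε * r) * b := by nlinarith
  have h3 : a ^ 2 ≤ b ^ 2 := by nlinarith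
  have key : (a + ε) ^ 3 * r + (b - ε * r) ^ 3 - (a ^ 3 * r + b ^ 3)
      = ε * r * (((a + ε) ^ 2 + (a + ε) * a + a ^ 2)
          - ((b - ε * r) ^ 2 + (b - ε * r) * b + b ^ 2)) := by ring
  nlinarith [mul_neg_of_pos_of_neg hεr (show ((a + ε) ^ 2 + (a + ε) * a + a ^ 2)
      - ((b - ε * r) ^ 2 + (b - ε * r) * b + b ^ 2) < 0 by linarith)]

lemma cube_dec_le {c d ε r : ℝ} (hε : 0 < ε) (hr : 0 < r) (hd : 0 ≤ d)
    (h : d + ε * r ≤ c - ε) :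
    (c - ε) ^ 3 * r + (d + ε * r) ^ 3 ≤ c ^ 3 * r + d ^ 3 := by
  have hεr : 0 < ε * r := mul_pos hε hr
  have h1 : (d + ε * r) ^ 2 ≤ (c - ε) ^ 2 := by nlinarith
  have h2 : (d + ε * r) * d ≤ (c - ε) * c := by nlinarith
  have h3 : d ^ 2 ≤ c ^ 2 := by nlinarith
  have key : (c - ε) ^ 3 * r + (d + ε * r) ^ 3 - (c ^ 3 * r + d ^ 3)
      = ε * r * (((d + ε * r) ^ 2 + (d + ε * r) * d + d ^ 2)
          - ((c - ε) ^ 2 + (c - ε) * c + c ^ 2)) := by ring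
  nlinarith [mul_nonpos_of_nonneg_of_nonpos (le_of_lt hεr)
      (show ((d + ε * r) ^ 2 + (d + ε * r) * d + d ^ 2)
          - ((c - ε) ^ 2 + (c - ε) * c + c ^ 2) ≤ 0 by linarith)]

/-- Row monotonicity: in any optimal allocation, the frequency allocated to each
task is nonincreasing over its computation slots. -/
theorem stmt_10 (N : ℕ) (hN : 1 ≤ N) (κ Fmax : ℝ) (hκ : 0 < κ) (F Δt : ℕ → ℝ)
    (hF : ∀ n ∈ Finset.Icc 1 N, 0 < F n)
    (hΔt : ∀ m ∈ Finset.Icc 2 (N + 1), 0 < Δt m)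
    (hfeas : ∀ n ∈ Finset.Icc 1 N,
      (∑ i ∈ Finset.Icc n N, F i) / (∑ i ∈ Finset.Icc (n + 1) (N + 1), Δt i) ≤ Fmax)
    (f : ℕ → ℕ → ℝ) (hf : FeasibleAlloc N Fmax F Δt f)
    (hopt : ∀ g : ℕ → ℕ → ℝ, FeasibleAlloc N Fmax F Δt g →
      allocEnergy N κ Δt f ≤ allocEnergy N κ Δt g) :
    ∀ n ∈ Finset.Icc 1 N, ∀ m ∈ Finset.Icc (n + 1) N, f n (m + 1) ≤ f n m := by
  intro n hnmem m hmmem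
  by_contra hcon
  push_neg at hcon
  obtain ⟨hn1, hnN⟩ := Finset.mem_Icc.mp hnmem
  obtain ⟨hmn, hmN⟩ := Finset.mem_Icc.mp hmmem
  obtain ⟨hpos, hcap, hcomp⟩ := hf
  have hΔm : 0 < Δt m := hΔt m (Finset.mem_Icc.mpr ⟨by omega, by omega⟩)
  have hΔm1 : 0 < Δt (m + 1) := hΔt (m + 1) (Finset.mem_Icc.mpr ⟨by omega, by omega⟩)
  set r : ℝ := Δt m / Δt (m + 1) with hrdef
  have hr : 0 < r := div_pos hΔm hΔm1
  have h1r : (0:ℝ) < 1 + r := by linarith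
  have hrmul : r * Δt (m + 1) = Δt m := div_mul_cancel₀ _ (ne_of_gt hΔm1)
  have hmIcc : m ∈ Finset.Icc (n + 1) (N + 1) := Finset.mem_Icc.mpr ⟨hmn, by omega⟩
  have hm1Icc : m + 1 ∈ Finset.Icc (n + 1) (N + 1) := Finset.mem_Icc.mpr ⟨by omega, by omega⟩
  have ha : 0 ≤ f n m := hpos n hnmem m hmIcc
  have hb : 0 < f n (m + 1) := lt_of_le_of_lt ha hcon
  have hne1 : m + 1 ≠ m := by omega
  by_cases hex : ∃ n' ∈ Finset.Icc 1 (m - 1), f n' (m + 1) < f n' m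
  · -- swap case
    obtain ⟨n', hn'mem, hlt'⟩ := hex
    obtain ⟨hn'1, hn'm⟩ := Finset.mem_Icc.mp hn'mem
    have hnn' : n ≠ n' := by
      rintro rfl; exact absurd hcon (not_lt.mpr (le_of_lt hlt'))
    have hn'N : n' ∈ Finset.Icc 1 N := Finset.mem_Icc.mpr ⟨hn'1, by omega⟩
    have hmIcc' : m ∈ Finset.Icc (n' + 1) (N + 1) := Finset.mem_Icc.mpr ⟨by omega, by omega⟩
    have hm1Icc' : m + 1 ∈ Finset.Icc (n' + 1) (N + 1) := Finset.mem_Icc.mpr ⟨by omega, by omega⟩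
    have hd0 : 0 ≤ f n' (m + 1) := hpos n' hn'N (m + 1) hm1Icc'
    set ε : ℝ := min ((f n (m+1) - f n m) / (2 * (1 + r)))
        ((f n' m - f n' (m+1)) / (1 + r)) with hεdef
    have hε : 0 < ε := lt_min (div_pos (by linarith) (by linarith)) (div_pos (by linarith) h1r)
    have hεr : 0 < ε * r := mul_pos hε hr
    have hε1 : ε * (1 + r) < f n (m+1) - f n m := by
      have h : ε ≤ (f n (m+1) - f n m) / (2 * (1 + r)) := min_le_left _ _
      have h' := mul_le_mul_of_nonneg_right h (le_of_lt h1r)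
      have heq : (f n (m+1) - f n m) / (2 * (1 + r)) * (1 + r) = (f n (m+1) - f n m) / 2 := by
        field_simp
      rw [heq] at h'
      linarith
    have hε2 : ε * (1 + r) ≤ f n' m - f n' (m+1) := by
      have h : ε ≤ (f n' m - f n' (m+1)) / (1 + r) := min_le_right _ _
      have h' := mul_le_mul_of_nonneg_right h (le_of_lt h1r)
      rwa [div_mul_cancel₀ _ (ne_of_gt h1r)] at h'
    have hab : f n m + ε < f n (m+1) - ε * r := by nlinarith
    have hdc : f n' (m+1) + ε * r ≤ f n' m - ε := by nlinarith
    set g : ℕ → ℕ → ℝ := fun i j =>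
      if i = n ∧ j = m then f n m + ε
      else if i = n ∧ j = m + 1 then f n (m+1) - ε * r
      else if i = n' ∧ j = m then f n' m - ε
      else if i = n' ∧ j = m + 1 then f n' (m+1) + ε * r
      else f i j with hgdef
    have hgnm : g n m = f n m + ε := by simp [hgdef]
    have hgnm1 : g n (m+1) = f n (m+1) - ε * r := by simp [hgdef, hne1]
    have hgn'm : g n' m = f n' m - ε := by simp [hgdef, Ne.symm hnn']
    have hgn'm1 : g n' (m+1) = f n' (m+1) + ε * r := by simp [hgdef, Ne.symm hnn', hne1]
    have hgrow : ∀ i j, i ≠ n → i ≠ n' → g i j = f i j := by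
      intro i j h1 h2; simp [hgdef, h1, h2]
    have hgcol : ∀ i j, j ≠ m → j ≠ m + 1 → g i j = f i j := by
      intro i j h1 h2; simp [hgdef, h1, h2]
    have hfeasg : FeasibleAlloc N Fmax F Δt g := by
      refine ⟨?_, ?_, ?_⟩
      · intro i hi j hj
        by_cases h1 : i = n
        · by_cases h2 : j = m
          · rw [h1, h2, hgnm]; linarith
          · by_cases h3 : j = m + 1
            · rw [h1, h3, hgnm1]; linarith
            · rw [hgcol _ _ h2 h3]; exact hpos _ hi _ hj
        · by_cases h1' : i = n'
          · by_cases h2 : j = m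
            · rw [h1', h2, hgn'm]; linarith
            · by_cases h3 : j = m + 1
              · rw [h1', h3, hgn'm1]; linarith
              · rw [hgcol _ _ h2 h3]; exact hpos _ hi _ hj
          · rw [hgrow _ _ h1 h1']; exact hpos _ hi _ hj
      · intro m' hm'
        by_cases h2 : m' = m
        · rw [h2]
          have hsum : ∑ x ∈ Finset.Icc 1 (m-1), (g x m - f x m)
              = (g n m - f n m) + (g n' m - f n' m) :=
            sum_support_pair hnn' (Finset.mem_Icc.mpr ⟨hn1, by omega⟩) hn'mem
              (fun x _ hx1 hx2 => by rw [hgrow x m hx1 hx2]; ring)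
          rw [Finset.sum_sub_distrib, hgnm, hgn'm] at hsum
          have heq : ∑ x ∈ Finset.Icc 1 (m-1), g x m = ∑ x ∈ Finset.Icc 1 (m-1), f x m := by
            linarith
          rw [heq]; exact hcap m (Finset.mem_Icc.mpr ⟨by omega, by omega⟩)
        · by_cases h3 : m' = m + 1
          · rw [h3]
            have hmm : m + 1 - 1 = m := by omega
            rw [hmm]
            have hsum : ∑ x ∈ Finset.Icc 1 m, (g x (m+1) - f x (m+1))
                = (g n (m+1) - f n (m+1)) + (g n' (m+1) - f n' (m+1)) :=
              sum_support_pair hnn' (Finset.mem_Icc.mpr ⟨hn1, by omega⟩)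
                (Finset.mem_Icc.mpr ⟨hn'1, by omega⟩)
                (fun x _ hx1 hx2 => by rw [hgrow x (m+1) hx1 hx2]; ring)
            rw [Finset.sum_sub_distrib, hgnm1, hgn'm1] at hsum
            have heq : ∑ x ∈ Finset.Icc 1 m, g x (m+1) = ∑ x ∈ Finset.Icc 1 m, f x (m+1) := by
              linarith
            rw [heq]
            have hc := hcap (m+1) (Finset.mem_Icc.mpr ⟨by omega, by omega⟩)
            rwa [hmm] at hc
          · have hc : ∀ x ∈ Finset.Icc 1 (m'-1), g x m' = f x m' := fun x _ => hgcol x m' h2 h3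
            rw [Finset.sum_congr rfl hc]; exact hcap m' hm'
      · intro i hi
        by_cases h1 : i = n
        · rw [h1]
          have hsum : ∑ j ∈ Finset.Icc (n+1) (N+1), (g n j * Δt j - f n j * Δt j)
              = (g n m * Δt m - f n m * Δt m)
                + (g n (m+1) * Δt (m+1) - f n (m+1) * Δt (m+1)) :=
            sum_support_pair (by omega) hmIcc hm1Icc
              (fun x _ hx1 hx2 => by rw [hgcol n x hx1 hx2]; ring)
          rw [Finset.sum_sub_distrib, hgnm, hgnm1] at hsum
          have hz : (f n m + ε) * Δt m - f n m * Δt m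
              + ((f n (m+1) - ε * r) * Δt (m+1) - f n (m+1) * Δt (m+1))
              = ε * Δt m - ε * (r * Δt (m+1)) := by ring
          rw [hrmul] at hz
          have heq : ∑ j ∈ Finset.Icc (n+1) (N+1), g n j * Δt j
              = ∑ j ∈ Finset.Icc (n+1) (N+1), f n j * Δt j := by linarith
          rw [heq]; exact hcomp n hnmem
        · by_cases h1' : i = n'
          · rw [h1']
            have hsum : ∑ j ∈ Finset.Icc (n'+1) (N+1), (g n' j * Δt j - f n' j * Δt j)
                = (g n' m * Δt m - f n' m * Δt m)
                  + (g n' (m+1) * Δt (m+1) - f n' (m+1) * Δt (m+1)) :=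
              sum_support_pair (by omega) hmIcc' hm1Icc'
                (fun x _ hx1 hx2 => by rw [hgcol n' x hx1 hx2]; ring)
            rw [Finset.sum_sub_distrib, hgn'm, hgn'm1] at hsum
            have hz : (f n' m - ε) * Δt m - f n' m * Δt m
                + ((f n' (m+1) + ε * r) * Δt (m+1) - f n' (m+1) * Δt (m+1))
                = ε * (r * Δt (m+1)) - ε * Δt m := by ring
            rw [hrmul] at hz
            have heq : ∑ j ∈ Finset.Icc (n'+1) (N+1), g n' j * Δt j
                = ∑ j ∈ Finset.Icc (n'+1) (N+1), f n' j * Δt j := by linarith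
            rw [heq]; exact hcomp n' hn'N
          · have hc : ∀ j ∈ Finset.Icc (i+1) (N+1), g i j * Δt j = f i j * Δt j :=
              fun j _ => by rw [hgrow i j h1 h1']
            rw [Finset.sum_congr rfl hc]; exact hcomp i hi
    -- energy strictly decreases
    have houter : ∑ x ∈ Finset.Icc 1 N,
        ((∑ j ∈ Finset.Icc (x+1) (N+1), κ * g x j ^ 3 * Δt j)
          - ∑ j ∈ Finset.Icc (x+1) (N+1), κ * f x j ^ 3 * Δt j)
        = ((∑ j ∈ Finset.Icc (n+1) (N+1), κ * g n j ^ 3 * Δt j)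
            - ∑ j ∈ Finset.Icc (n+1) (N+1), κ * f n j ^ 3 * Δt j)
          + ((∑ j ∈ Finset.Icc (n'+1) (N+1), κ * g n' j ^ 3 * Δt j)
            - ∑ j ∈ Finset.Icc (n'+1) (N+1), κ * f n' j ^ 3 * Δt j) :=
      sum_support_pair hnn' hnmem hn'N (fun x _ hx1 hx2 => by
        rw [sub_eq_zero]
        exact Finset.sum_congr rfl (fun j _ => by rw [hgrow x j hx1 hx2]))
    have hinn : (∑ j ∈ Finset.Icc (n+1) (N+1), κ * g n j ^ 3 * Δt j)
        - ∑ j ∈ Finset.Icc (n+1) (N+1), κ * f n j ^ 3 * Δt j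
        = (κ * (f n m + ε) ^ 3 * Δt m - κ * f n m ^ 3 * Δt m)
          + (κ * (f n (m+1) - ε * r) ^ 3 * Δt (m+1) - κ * f n (m+1) ^ 3 * Δt (m+1)) := by
      rw [← Finset.sum_sub_distrib]
      rw [sum_support_pair (show m ≠ m + 1 by omega) hmIcc hm1Icc
        (fun x _ hx1 hx2 => by rw [hgcol n x hx1 hx2]; ring), hgnm, hgnm1]
    have hinn' : (∑ j ∈ Finset.Icc (n'+1) (N+1), κ * g n' j ^ 3 * Δt j)
        - ∑ j ∈ Finset.Icc (n'+1) (N+1), κ * f n' j ^ 3 * Δt j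
        = (κ * (f n' m - ε) ^ 3 * Δt m - κ * f n' m ^ 3 * Δt m)
          + (κ * (f n' (m+1) + ε * r) ^ 3 * Δt (m+1) - κ * f n' (m+1) ^ 3 * Δt (m+1)) := by
      rw [← Finset.sum_sub_distrib]
      rw [sum_support_pair (show m ≠ m + 1 by omega) hmIcc' hm1Icc'
        (fun x _ hx1 hx2 => by rw [hgcol n' x hx1 hx2]; ring), hgn'm, hgn'm1]
    have hDn : (κ * (f n m + ε) ^ 3 * Δt m - κ * f n m ^ 3 * Δt m)
        + (κ * (f n (m+1) - ε * r) ^ 3 * Δt (m+1) - κ * f n (m+1) ^ 3 * Δt (m+1)) < 0 := by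
      have hkey := cube_dec_strict hε hr ha hab
      have heq : (κ * (f n m + ε) ^ 3 * Δt m - κ * f n m ^ 3 * Δt m)
          + (κ * (f n (m+1) - ε * r) ^ 3 * Δt (m+1) - κ * f n (m+1) ^ 3 * Δt (m+1))
          = κ * Δt (m+1) * (((f n m + ε) ^ 3 * r + (f n (m+1) - ε * r) ^ 3)
              - (f n m ^ 3 * r + f n (m+1) ^ 3)) := by
        rw [← hrmul]; ring
      rw [heq]
      exact mul_neg_of_pos_of_neg (mul_pos hκ hΔm1) (by linarith)
    have hDn' : (κ * (f n' m - ε) ^ 3 * Δt m - κ * f n' m ^ 3 * Δt m)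
        + (κ * (f n' (m+1) + ε * r) ^ 3 * Δt (m+1) - κ * f n' (m+1) ^ 3 * Δt (m+1)) ≤ 0 := by
      have hkey := cube_dec_le hε hr hd0 hdc
      have heq : (κ * (f n' m - ε) ^ 3 * Δt m - κ * f n' m ^ 3 * Δt m)
          + (κ * (f n' (m+1) + ε * r) ^ 3 * Δt (m+1) - κ * f n' (m+1) ^ 3 * Δt (m+1))
          = κ * Δt (m+1) * (((f n' m - ε) ^ 3 * r + (f n' (m+1) + ε * r) ^ 3)
              - (f n' m ^ 3 * r + f n' (m+1) ^ 3)) := by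
        rw [← hrmul]; ring
      rw [heq]
      exact mul_nonpos_of_nonneg_of_nonpos (le_of_lt (mul_pos hκ hΔm1)) (by linarith)
    have hEdiff : allocEnergy N κ Δt g - allocEnergy N κ Δt f < 0 := by
      unfold allocEnergy
      rw [← Finset.sum_sub_distrib]
      calc ∑ x ∈ Finset.Icc 1 N,
            ((∑ j ∈ Finset.Icc (x+1) (N+1), κ * g x j ^ 3 * Δt j)
              - ∑ j ∈ Finset.Icc (x+1) (N+1), κ * f x j ^ 3 * Δt j) = _ := houter
        _ < 0 := by rw [hinn, hinn']; linarith
    have := hopt g hfeasg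
    linarith
  · push_neg at hex
    have hnmem' : n ∈ Finset.Icc 1 (m-1) := Finset.mem_Icc.mpr ⟨hn1, by omega⟩
    have hS : ∑ i ∈ Finset.Icc 1 (m-1), f i m < Fmax := by
      have h1 : ∑ i ∈ Finset.Icc 1 (m-1), f i m < ∑ i ∈ Finset.Icc 1 (m-1), f i (m+1) :=
        Finset.sum_lt_sum hex ⟨n, hnmem', hcon⟩
      have h2 : ∑ i ∈ Finset.Icc 1 (m-1), f i (m+1) ≤ ∑ i ∈ Finset.Icc 1 m, f i (m+1) := by
        apply Finset.sum_le_sum_of_subset_of_nonneg (Finset.Icc_subset_Icc_right (by omega))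
        intro i hi _
        obtain ⟨hi1, hi2⟩ := Finset.mem_Icc.mp hi
        exact hpos i (Finset.mem_Icc.mpr ⟨hi1, by omega⟩) (m+1)
          (Finset.mem_Icc.mpr ⟨by omega, by omega⟩)
      have h3 : ∑ i ∈ Finset.Icc 1 m, f i (m+1) ≤ Fmax := by
        have hc := hcap (m+1) (Finset.mem_Icc.mpr ⟨by omega, by omega⟩)
        have hmm : m + 1 - 1 = m := by omega
        rwa [hmm] at hc
      linarith
    set ε : ℝ := min ((f n (m+1) - f n m) / (2 * (1 + r)))
        (Fmax - ∑ i ∈ Finset.Icc 1 (m-1), f i m) with hεdef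
    have hε : 0 < ε := lt_min (div_pos (by linarith) (by linarith)) (by linarith)
    have hεr : 0 < ε * r := mul_pos hε hr
    have hε1 : ε * (1 + r) < f n (m+1) - f n m := by
      have h : ε ≤ (f n (m+1) - f n m) / (2 * (1 + r)) := min_le_left _ _
      have h' := mul_le_mul_of_nonneg_right h (le_of_lt h1r)
      have heq : (f n (m+1) - f n m) / (2 * (1 + r)) * (1 + r) = (f n (m+1) - f n m) / 2 := by
        field_simp
      rw [heq] at h'
      linarith
    have hεcap : ε ≤ Fmax - ∑ i ∈ Finset.Icc 1 (m-1), f i m := min_le_right _ _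
    have hab : f n m + ε < f n (m+1) - ε * r := by nlinarith
    set g : ℕ → ℕ → ℝ := fun i j =>
      if i = n ∧ j = m then f n m + ε
      else if i = n ∧ j = m + 1 then f n (m+1) - ε * r
      else f i j with hgdef
    have hgnm : g n m = f n m + ε := by simp [hgdef]
    have hgnm1 : g n (m+1) = f n (m+1) - ε * r := by simp [hgdef, hne1]
    have hgrow : ∀ i j, i ≠ n → g i j = f i j := by
      intro i j h1; simp [hgdef, h1]
    have hgcol : ∀ i j, j ≠ m → j ≠ m + 1 → g i j = f i j := by
      intro i j h1 h2; simp [hgdef, h1, h2]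
    have hfeasg : FeasibleAlloc N Fmax F Δt g := by
      refine ⟨?_, ?_, ?_⟩
      · intro i hi j hj
        by_cases h1 : i = n
        · by_cases h2 : j = m
          · rw [h1, h2, hgnm]; linarith
          · by_cases h3 : j = m + 1
            · rw [h1, h3, hgnm1]; linarith
            · rw [hgcol _ _ h2 h3]; exact hpos _ hi _ hj
        · rw [hgrow _ _ h1]; exact hpos _ hi _ hj
      · intro m' hm'
        by_cases h2 : m' = m
        · rw [h2]
          have hsum : ∑ x ∈ Finset.Icc 1 (m-1), (g x m - f x m) = g n m - f n m :=
            Finset.sum_eq_single_of_mem n hnmem'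
              (fun x _ hx1 => by rw [hgrow x m hx1]; ring)
          rw [Finset.sum_sub_distrib, hgnm] at hsum
          have heq : ∑ x ∈ Finset.Icc 1 (m-1), g x m
              = (∑ x ∈ Finset.Icc 1 (m-1), f x m) + ε := by linarith
          rw [heq]; linarith
        · by_cases h3 : m' = m + 1
          · rw [h3]
            have hmm : m + 1 - 1 = m := by omega
            rw [hmm]
            have hsum : ∑ x ∈ Finset.Icc 1 m, (g x (m+1) - f x (m+1)) = g n (m+1) - f n (m+1) :=
              Finset.sum_eq_single_of_mem n (Finset.mem_Icc.mpr ⟨hn1, by omega⟩)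
                (fun x _ hx1 => by rw [hgrow x (m+1) hx1]; ring)
            rw [Finset.sum_sub_distrib, hgnm1] at hsum
            have hc := hcap (m+1) (Finset.mem_Icc.mpr ⟨by omega, by omega⟩)
            rw [hmm] at hc
            have heq : ∑ x ∈ Finset.Icc 1 m, g x (m+1)
                = (∑ x ∈ Finset.Icc 1 m, f x (m+1)) - ε * r := by linarith
            rw [heq]; linarith
          · have hc : ∀ x ∈ Finset.Icc 1 (m'-1), g x m' = f x m' := fun x _ => hgcol x m' h2 h3
            rw [Finset.sum_congr rfl hc]; exact hcap m' hm'
      · intro i hi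
        by_cases h1 : i = n
        · rw [h1]
          have hsum : ∑ j ∈ Finset.Icc (n+1) (N+1), (g n j * Δt j - f n j * Δt j)
              = g n m * Δt m - f n m * Δt m
                + (g n (m+1) * Δt (m+1) - f n (m+1) * Δt (m+1)) :=
            sum_support_pair (by omega) hmIcc hm1Icc
              (fun x _ hx1 hx2 => by rw [hgcol n x hx1 hx2]; ring)
          rw [Finset.sum_sub_distrib, hgnm, hgnm1] at hsum
          have hz : (f n m + ε) * Δt m - f n m * Δt m
              + ((f n (m+1) - ε * r) * Δt (m+1) - f n (m+1) * Δt (m+1))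
              = ε * Δt m - ε * (r * Δt (m+1)) := by ring
          rw [hrmul] at hz
          have heq : ∑ j ∈ Finset.Icc (n+1) (N+1), g n j * Δt j
              = ∑ j ∈ Finset.Icc (n+1) (N+1), f n j * Δt j := by linarith
          rw [heq]; exact hcomp n hnmem
        · have hc : ∀ j ∈ Finset.Icc (i+1) (N+1), g i j * Δt j = f i j * Δt j :=
            fun j _ => by rw [hgrow i j h1]
          rw [Finset.sum_congr rfl hc]; exact hcomp i hi
    have houter : ∑ x ∈ Finset.Icc 1 N,
        ((∑ j ∈ Finset.Icc (x+1) (N+1), κ * g x j ^ 3 * Δt j)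
          - ∑ j ∈ Finset.Icc (x+1) (N+1), κ * f x j ^ 3 * Δt j)
        = (∑ j ∈ Finset.Icc (n+1) (N+1), κ * g n j ^ 3 * Δt j)
            - ∑ j ∈ Finset.Icc (n+1) (N+1), κ * f n j ^ 3 * Δt j :=
      Finset.sum_eq_single_of_mem n hnmem (fun x _ hx1 => by
        rw [sub_eq_zero]
        exact Finset.sum_congr rfl (fun j _ => by rw [hgrow x j hx1]))
    have hinn : (∑ j ∈ Finset.Icc (n+1) (N+1), κ * g n j ^ 3 * Δt j)
        - ∑ j ∈ Finset.Icc (n+1) (N+1), κ * f n j ^ 3 * Δt j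
        = (κ * (f n m + ε) ^ 3 * Δt m - κ * f n m ^ 3 * Δt m)
          + (κ * (f n (m+1) - ε * r) ^ 3 * Δt (m+1) - κ * f n (m+1) ^ 3 * Δt (m+1)) := by
      rw [← Finset.sum_sub_distrib]
      rw [sum_support_pair (show m ≠ m + 1 by omega) hmIcc hm1Icc
        (fun x _ hx1 hx2 => by rw [hgcol n x hx1 hx2]; ring), hgnm, hgnm1]
    have hDn : (κ * (f n m + ε) ^ 3 * Δt m - κ * f n m ^ 3 * Δt m)
        + (κ * (f n (m+1) - ε * r) ^ 3 * Δt (m+1) - κ * f n (m+1) ^ 3 * Δt (m+1)) < 0 := by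
      have hkey := cube_dec_strict hε hr ha hab
      have heq : (κ * (f n m + ε) ^ 3 * Δt m - κ * f n m ^ 3 * Δt m)
          + (κ * (f n (m+1) - ε * r) ^ 3 * Δt (m+1) - κ * f n (m+1) ^ 3 * Δt (m+1))
          = κ * Δt (m+1) * (((f n m + ε) ^ 3 * r + (f n (m+1) - ε * r) ^ 3)
              - (f n m ^ 3 * r + f n (m+1) ^ 3)) := by
        rw [← hrmul]; ring
      rw [heq]
      exact mul_neg_of_pos_of_neg (mul_pos hκ hΔm1) (by linarith)
    have hEdiff : allocEnergy N κ Δt g - allocEnergy N κ Δt f < 0 := by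
      unfold allocEnergy
      rw [← Finset.sum_sub_distrib]
      calc ∑ x ∈ Finset.Icc 1 N,
            ((∑ j ∈ Finset.Icc (x+1) (N+1), κ * g x j ^ 3 * Δt j)
              - ∑ j ∈ Finset.Icc (x+1) (N+1), κ * f x j ^ 3 * Δt j) = _ := houter
        _ < 0 := by rw [hinn]; linarith
    have := hopt g hfeasg
    linarith
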